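/- Let N be a squarefree positive integer and d a positive divisor of N. Then ∑_{c ∣ N} μ(gcd(c,d)) · c = μ(d) · σ₁(N/d) · φ(d), where σ₁ is the sum-of-divisors function and φ is Euler's totient function. -/

import Mathlib

open ArithmeticFunction
open scoped ArithmeticFunction.Moebius
open scoped ArithmeticFunction.zeta

private lemma gcd_mul_gcd_aux {a b d : ℕ} (h : Nat.Coprime a b) :
    Nat.gcd (a * b) d = Nat.gcd a d * Nat.gcd b d := by
  have hcop : Nat.Coprime (Nat.gcd a d) (Nat.gcd b d) :=
    Nat.Coprime.coprime_dvd_right (Nat.gcd_dvd_left b d)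
      (Nat.Coprime.coprime_dvd_left (Nat.gcd_dvd_left a d) h)
  apply Nat.dvd_antisymm
  · obtain ⟨y, z, hy, hz, hyz⟩ := Nat.dvd_mul.mp (Nat.gcd_dvd_left (a * b) d)
    have hyg : y ∣ Nat.gcd (a * b) d := hyz ▸ dvd_mul_right y z
    have hzg : z ∣ Nat.gcd (a * b) d := hyz ▸ dvd_mul_left z y
    have : y * z ∣ Nat.gcd a d * Nat.gcd b d :=
      mul_dvd_mul (Nat.dvd_gcd hy (hyg.trans (Nat.gcd_dvd_right _ _)))
        (Nat.dvd_gcd hz (hzg.trans (Nat.gcd_dvd_right _ _)))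
    exact hyz ▸ this
  · exact Nat.dvd_gcd (mul_dvd_mul (Nat.gcd_dvd_left a d) (Nat.gcd_dvd_left b d))
      (Nat.Coprime.mul_dvd_of_dvd_of_dvd hcop (Nat.gcd_dvd_right a d) (Nat.gcd_dvd_right b d))

private lemma sum_moebius_mul_self {d : ℕ} (hsd : Squarefree d) :
    ∑ a ∈ d.divisors, μ a * (a : ℤ) = μ d * (Nat.totient d : ℤ) := by
  have h1 : ∏ p ∈ d.primeFactors, (1 - ((ArithmeticFunction.id : ArithmeticFunction ℕ) :
      ArithmeticFunction ℤ) p) = ∑ a ∈ d.divisors, μ a *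
        ((ArithmeticFunction.id : ArithmeticFunction ℕ) : ArithmeticFunction ℤ) a :=
    IsMultiplicative.prodPrimeFactors_one_sub_of_squarefree _
      isMultiplicative_id.natCast hsd
  simp only [natCoe_apply, id_apply, Nat.cast_id] at h1
  rw [← h1]
  set G : ArithmeticFunction ℤ := ⟨fun n => μ n * (Nat.totient n : ℤ), by simp⟩ with hG
  have hGapp : ∀ n, G n = μ n * (Nat.totient n : ℤ) := fun _ => rfl
  have hmult : G.IsMultiplicative := by
    constructor
    · simp [hGapp]
    · intro a b hab
      rw [hGapp, hGapp, hGapp, isMultiplicative_moebius.map_mul_of_coprime hab,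
        Nat.totient_mul hab]
      push_cast
      ring
  have hd : d = ∏ p ∈ d.primeFactors, p := (Nat.prod_primeFactors_of_squarefree hsd).symm
  have h2 := hmult.map_prod_of_prime d.primeFactors fun p hp => Nat.prime_of_mem_primeFactors hp
  rw [← hd] at h2
  have h3 : (μ d : ℤ) * (Nat.totient d : ℤ) = ∏ p ∈ d.primeFactors, (1 - (p : ℤ)) := by
    rw [← hGapp, h2]
    simp only [hGapp]
    refine Finset.prod_congr rfl fun p hp => ?_
    have hp' := Nat.prime_of_mem_primeFactors hp
    rw [moebius_apply_prime hp', Nat.totient_prime hp']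
    have : (1:ℤ) ≤ p := by exact_mod_cast hp'.one_lt.le
    push_cast [Nat.cast_sub hp'.one_lt.le]
    ring
  rw [h3]

theorem stmt_3 (N : ℕ) (hN : 0 < N) (hsf : Squarefree N) (d : ℕ) (hd : d ∣ N) :
    ∑ c ∈ N.divisors, μ (Nat.gcd c d) * (c : ℤ) =
      μ d * (∑ e ∈ (N / d).divisors, (e : ℤ)) * (Nat.totient d : ℤ) := by
  set m := N / d with hm
  have hdm : d * m = N := Nat.mul_div_cancel' hd
  have hsf' : Squarefree (d * m) := hdm ▸ hsf
  have cop : d.Coprime m := Nat.coprime_of_squarefree_mul hsf'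
  set F : ArithmeticFunction ℤ := ⟨fun c => μ (Nat.gcd c d) * c, by simp⟩ with hF
  have hFapp : ∀ c, F c = μ (Nat.gcd c d) * c := fun c => rfl
  have hFmult : F.IsMultiplicative := by
    constructor
    · simp [hFapp, Nat.gcd_one_left]
    · intro a b hab
      have hcop : Nat.Coprime (Nat.gcd a d) (Nat.gcd b d) :=
        Nat.Coprime.coprime_dvd_right (Nat.gcd_dvd_left b d)
          (Nat.Coprime.coprime_dvd_left (Nat.gcd_dvd_left a d) hab)
      rw [hFapp, hFapp, hFapp, gcd_mul_gcd_aux hab,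
        isMultiplicative_moebius.map_mul_of_coprime hcop]
      push_cast
      ring
  have hconv : (F * (ζ : ArithmeticFunction ℕ)).IsMultiplicative :=
    hFmult.mul isMultiplicative_zeta.natCast
  have hL : ∑ c ∈ N.divisors, μ (Nat.gcd c d) * (c : ℤ) = (F * ζ) N := by
    rw [coe_mul_zeta_apply]
    exact Finset.sum_congr rfl fun c _ => (hFapp c).symm
  rw [hL, ← hdm, hconv.map_mul_of_coprime cop, coe_mul_zeta_apply, coe_mul_zeta_apply]
  have hd' : ∑ a ∈ d.divisors, F a = μ d * (Nat.totient d : ℤ) := by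
    rw [← sum_moebius_mul_self (hsf'.squarefree_of_dvd (Dvd.intro m rfl))]
    refine Finset.sum_congr rfl fun a ha => ?_
    rw [hFapp, Nat.gcd_eq_left (Nat.dvd_of_mem_divisors ha)]
  have hm' : ∑ b ∈ m.divisors, F b = ∑ e ∈ m.divisors, (e : ℤ) := by
    refine Finset.sum_congr rfl fun b hb => ?_
    rw [hFapp, Nat.Coprime.gcd_eq_one
      (Nat.Coprime.coprime_dvd_left (Nat.dvd_of_mem_divisors hb) cop.symm)]
    simp
  rw [hd', hm']
  ring
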